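/- arXiv:1607.00709 — 2 statements merged into one kernel-verified Lean document; each statement's English description precedes it below -/
import Mathlib

section
/- Let t > 0 be real, set s = 1/2 + it and s* = 1/2 − it, and suppose |s| > 1. Let d_m denote the m-th Taylor coefficient at z = 0 of g(z) := e^{s* z³/3} · f_{s*}(z). Then for every nonnegative integer m, |d_m| ≤ |s|^{m/4} · exp( 1/(2|s|^{1/4}) + 1/(4|s|^{1/2}) + 1/(4(1 − |s|^{−1/4})) ). -/
open Real Complex

/-- `f_s(z) = e^{(s−1/2)(z − z²/2)}/(1+z)^s`, holomorphic on the unit disc,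
with `(1+z)^s` the principal branch. -/
noncomputable def fRS (s : ℂ) (z : ℂ) : ℂ :=
  Complex.exp ((s - 1/2) * (z - z^2/2)) / (1+z)^s

/-- `g(z) = e^{s* z³/3} f_{s*}(z)` for `s* = 1/2 − it`. -/
noncomputable def gRS (t : ℝ) (z : ℂ) : ℂ :=
  Complex.exp ((1/2 - t * Complex.I) * z^3/3) * fRS (1/2 - t * Complex.I) z

lemma logTaylor_four (z : ℂ) : Complex.logTaylor 4 z = z - z^2/2 + z^3/3 := by
  simp [Complex.logTaylor, Finset.sum_range_succ]
  ring

lemma gRS_eq (t : ℝ) {z : ℂ} (hz : 1 + z ∈ Complex.slitPlane) :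
    gRS t z = Complex.exp ((1/2 - t * Complex.I) *
      (z - z^2/2 + z^3/3 - Complex.log (1+z)) - (1/2) * (z - z^2/2)) := by
  have h0 : (1 + z) ≠ 0 := Complex.slitPlane_ne_zero hz
  rw [gRS, fRS, Complex.cpow_def_of_ne_zero h0, ← Complex.exp_sub, ← Complex.exp_add]
  ring_nf

lemma gRS_norm_le (t : ℝ) {r : ℝ} (hr1 : r < 1) {z : ℂ}
    (hz : ‖z‖ ≤ r) :
    ‖gRS t z‖ ≤ Real.exp (‖(1/2 - t * Complex.I : ℂ)‖ * (r^4 * (1-r)⁻¹ / 4)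
      + (r + r^2/2)/2) := by
  have hz1 : ‖z‖ < 1 := lt_of_le_of_lt hz hr1
  have hsp : 1 + z ∈ Complex.slitPlane := Complex.mem_slitPlane_of_norm_lt_one hz1
  rw [gRS_eq t hsp, Complex.norm_exp]
  apply Real.exp_le_exp.2
  set w₁ : ℂ := (1/2 - t * Complex.I) * (z - z^2/2 + z^3/3 - Complex.log (1+z))
  set w₂ : ℂ := (1/2 : ℂ) * (z - z^2/2)
  calc (w₁ - w₂).re ≤ ‖w₁ - w₂‖ := Complex.re_le_norm _
    _ ≤ ‖w₁‖ + ‖w₂‖ := norm_sub_le _ _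
    _ ≤ ‖(1/2 - t * Complex.I : ℂ)‖ * (r^4 * (1-r)⁻¹ / 4) + (r + r^2/2)/2 := by
        gcongr
        · have h1 : ‖w₁‖ = ‖(1/2 - t * Complex.I : ℂ)‖
              * ‖Complex.log (1+z) - Complex.logTaylor 4 z‖ := by
            rw [norm_mul]
            congr 1
            rw [← norm_neg]
            congr 1
            rw [logTaylor_four]
            ring
          rw [h1]
          gcongr
          have hlog : ‖Complex.log (1+z) - Complex.logTaylor 4 z‖
              ≤ ‖z‖ ^ 4 * (1 - ‖z‖)⁻¹ / 4 := by
            have := Complex.norm_log_sub_logTaylor_le 3 hz1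
            norm_num at this ⊢
            exact this
          have hp4 : ‖z‖^4 ≤ r^4 := by gcongr
          have h0 : (0:ℝ) ≤ (1-‖z‖)⁻¹ := inv_nonneg.2 (by linarith)
          have hinv : (1-‖z‖)⁻¹ ≤ (1-r)⁻¹ := by
            apply inv_anti₀ (by linarith) (by linarith)
          have := mul_le_mul hp4 hinv h0 (by positivity : (0:ℝ) ≤ r^4)
          linarith
        · calc ‖w₂‖ = ‖z - z^2/2‖ / 2 := by
                rw [norm_mul]; simp; ring
            _ ≤ (‖z‖ + ‖z‖^2/2) / 2 := by
                have := norm_sub_le z (z^2/2)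
                have h2 : ‖z^2/2‖ = ‖z‖^2/2 := by
                  rw [norm_div, norm_pow]; simp
                rw [h2] at this
                linarith
            _ ≤ (r + r^2/2)/2 := by gcongr

lemma gRS_diffOn (t : ℝ) {r : ℝ} (hr1 : r < 1) :
    DifferentiableOn ℂ (gRS t) (Metric.closedBall 0 r) := by
  intro z hz
  rw [Metric.mem_closedBall, dist_zero_right] at hz
  have hz1 : ‖z‖ < 1 := lt_of_le_of_lt hz hr1
  have hsp : 1 + z ∈ Complex.slitPlane := Complex.mem_slitPlane_of_norm_lt_one hz1
  have h0 : (1 + z) ≠ 0 := Complex.slitPlane_ne_zero hsp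
  apply DifferentiableAt.differentiableWithinAt
  apply DifferentiableAt.mul
  · apply DifferentiableAt.cexp; fun_prop
  · unfold fRS
    apply DifferentiableAt.div
    · apply DifferentiableAt.cexp; fun_prop
    · exact DifferentiableAt.cpow (by fun_prop) (by fun_prop) hsp
    · rw [Complex.cpow_def_of_ne_zero h0]; exact Complex.exp_ne_zero _

/-- Cauchy estimate for the Taylor coefficients of `gRS`. -/
lemma gRS_coeff_le (t : ℝ) {r : ℝ} (hr0 : 0 < r) (hr1 : r < 1) (m : ℕ)
    (M : ℝ) (hM : ∀ z : ℂ, ‖z‖ ≤ r → ‖gRS t z‖ ≤ M) :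
    ‖iteratedDeriv m (gRS t) 0 / (Nat.factorial m : ℂ)‖ ≤ M * r⁻¹ ^ m := by
  have hd : DifferentiableOn ℂ (gRS t) (Metric.closedBall 0 r) := gRS_diffOn t hr1
  lift r to NNReal using hr0.le with R hR
  have hps : HasFPowerSeriesOnBall (gRS t) (cauchyPowerSeries (gRS t) 0 R) 0 R :=
    hd.hasFPowerSeriesOnBall (by exact_mod_cast hr0)
  have hder : iteratedDeriv m (gRS t) 0
      = m.factorial • (cauchyPowerSeries (gRS t) 0 R m fun _ => 1) := by
    rw [iteratedDeriv_eq_iteratedFDeriv, ← hps.factorial_smul 1]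
  have hfac : (0:ℝ) < (m.factorial : ℝ) := by exact_mod_cast m.factorial_pos
  have h1 : ‖iteratedDeriv m (gRS t) 0 / (Nat.factorial m : ℂ)‖
      = ‖cauchyPowerSeries (gRS t) 0 R m fun _ => 1‖ := by
    rw [norm_div, hder, nsmul_eq_mul, norm_mul, Complex.norm_natCast]
    field_simp
  rw [h1]
  calc ‖cauchyPowerSeries (gRS t) 0 R m fun _ => 1‖
      ≤ ‖cauchyPowerSeries (gRS t) 0 R m‖ := by
        have := (cauchyPowerSeries (gRS t) 0 R m).le_opNorm fun _ => (1:ℂ)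
        simpa using this
    _ ≤ ((2 * π)⁻¹ * ∫ θ : ℝ in (0)..2 * π, ‖gRS t (circleMap 0 R θ)‖) * |(R:ℝ)|⁻¹ ^ m :=
        norm_cauchyPowerSeries_le _ _ _ _
    _ ≤ M * (R:ℝ)⁻¹ ^ m := by
        have hmem : ∀ θ : ℝ, circleMap 0 (R:ℝ) θ ∈ Metric.closedBall (0:ℂ) (R:ℝ) := by
          intro θ
          simp [Metric.mem_closedBall, Complex.dist_eq, norm_circleMap_zero,
            _root_.abs_of_nonneg R.2]
        have hcont : ContinuousOn (fun θ : ℝ => ‖gRS t (circleMap 0 (R:ℝ) θ)‖)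
            (Set.Icc 0 (2*π)) :=
          (hd.continuousOn.comp (continuous_circleMap 0 (R:ℝ)).continuousOn
            (fun θ _ => hmem θ)).norm
        have hii : IntervalIntegrable (fun θ : ℝ => ‖gRS t (circleMap 0 (R:ℝ) θ)‖)
            MeasureTheory.volume 0 (2*π) := by
          apply ContinuousOn.intervalIntegrable
          rwa [Set.uIcc_of_le Real.two_pi_pos.le]
        have hIle : (∫ θ : ℝ in (0)..2*π, ‖gRS t (circleMap 0 (R:ℝ) θ)‖) ≤ 2*π*M := by
          have := intervalIntegral.integral_mono_on Real.two_pi_pos.le hii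
            intervalIntegrable_const (g := fun _ => M)
            (fun θ _ => by
              apply hM
              have := hmem θ
              rwa [Metric.mem_closedBall, dist_zero_right] at this)
          simpa [mul_comm] using this
        have habsR : |(R:ℝ)| = (R:ℝ) := _root_.abs_of_nonneg R.2
        rw [habsR]
        gcongr ?_ * _
        calc (2 * π)⁻¹ * ∫ θ : ℝ in (0)..2 * π, ‖gRS t (circleMap 0 (R:ℝ) θ)‖
            ≤ (2 * π)⁻¹ * (2*π*M) := by
              gcongr
          _ = M := by
              rw [← mul_assoc, inv_mul_cancel₀ Real.two_pi_pos.ne', one_mul]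

/-- Let `t > 0`, `s = 1/2 + it`, `s* = 1/2 − it`, `|s| > 1`, and let
`d_m = g^{(m)}(0)/m!` be the Taylor coefficients of `g(z) = e^{s* z³/3} f_{s*}(z)`
at `0`. Then for every `m ≥ 0`,
`|d_m| ≤ |s|^{m/4} exp(1/(2|s|^{1/4}) + 1/(4|s|^{1/2}) + 1/(4(1 − |s|^{−1/4})))`. -/
theorem stmt_12 (t : ℝ) (ht : 0 < t)
    (hs : 1 < ‖(1/2 + t * Complex.I : ℂ)‖) (m : ℕ) :
    ‖iteratedDeriv m (gRS t) 0 / (Nat.factorial m : ℂ)‖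
      ≤ ‖(1/2 + t * Complex.I : ℂ)‖ ^ ((m:ℝ)/4)
        * Real.exp (1/(2 * ‖(1/2 + t * Complex.I : ℂ)‖ ^ ((1:ℝ)/4))
            + 1/(4 * ‖(1/2 + t * Complex.I : ℂ)‖ ^ ((1:ℝ)/2))
            + 1/(4 * (1 - ‖(1/2 + t * Complex.I : ℂ)‖ ^ (-(1:ℝ)/4)))) := by
  set a : ℝ := ‖(1/2 + t * Complex.I : ℂ)‖ with ha
  have ha1 : 1 < a := hs
  have ha0 : 0 < a := by linarith
  set r : ℝ := a ^ (-(1:ℝ)/4) with hrdef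
  have hr0 : 0 < r := Real.rpow_pos_of_pos ha0 _
  have hr1 : r < 1 := by
    rw [hrdef]
    exact Real.rpow_lt_one_of_one_lt_of_neg ha1 (by norm_num)
  have habs : ‖(1/2 - t * Complex.I : ℂ)‖ = a := by
    rw [ha, show ((1:ℂ)/2 - t * Complex.I) = starRingEnd ℂ (1/2 + t * Complex.I) by
      simp [Complex.ext_iff], Complex.norm_conj]
  -- powers of a
  have hx0 : (0:ℝ) < a ^ ((1:ℝ)/4) := Real.rpow_pos_of_pos ha0 _
  have hy0 : (0:ℝ) < a ^ ((1:ℝ)/2) := Real.rpow_pos_of_pos ha0 _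
  have hr_inv : r⁻¹ = a ^ ((1:ℝ)/4) := by
    rw [hrdef, neg_div, Real.rpow_neg ha0.le, inv_inv]
  have hr4 : r^4 = a⁻¹ := by
    rw [hrdef, ← Real.rpow_natCast (a ^ (-(1:ℝ)/4)) 4, ← Real.rpow_mul ha0.le]
    norm_num
    exact (Real.rpow_neg_one a).symm ▸ by rw [← Real.rpow_neg_one a]
  have hr2 : r^2 = (a ^ ((1:ℝ)/2))⁻¹ := by
    rw [hrdef, ← Real.rpow_natCast (a ^ (-(1:ℝ)/4)) 2, ← Real.rpow_mul ha0.le,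
      ← Real.rpow_neg ha0.le]
    norm_num
  have hr_eq : r = (a ^ ((1:ℝ)/4))⁻¹ := by
    rw [hrdef, neg_div, Real.rpow_neg ha0.le]
  -- the sup bound
  set M : ℝ := Real.exp (‖(1/2 - t * Complex.I : ℂ)‖ * (r^4 * (1-r)⁻¹ / 4)
      + (r + r^2/2)/2) with hMdef
  have key := gRS_coeff_le t hr0 hr1 m M (fun z hz => gRS_norm_le t hr1 hz)
  -- rewrite the bound
  have hd0 : (0:ℝ) < 1 - r := by linarith
  have hexp_eq : M = Real.exp (1/(2 * a ^ ((1:ℝ)/4)) + 1/(4 * a ^ ((1:ℝ)/2))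
      + 1/(4 * (1 - r))) := by
    rw [hMdef, habs, hr4]
    congr 1
    have e1 : a * (a⁻¹ * (1-r)⁻¹ / 4) = 1/(4*(1-r)) := by
      rw [mul_div_assoc', ← mul_assoc, mul_inv_cancel₀ ha0.ne', one_mul]
      rw [inv_eq_one_div, div_div]
      ring_nf
    have e2 : (r + r^2/2)/2 = 1/(2*a^((1:ℝ)/4)) + 1/(4*a^((1:ℝ)/2)) := by
      rw [hr2, hr_eq]
      field_simp
      ring
    rw [e1, e2]
    ring
  have hpow_eq : r⁻¹ ^ m = a ^ ((m:ℝ)/4) := by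
    rw [hr_inv, ← Real.rpow_natCast (a ^ ((1:ℝ)/4)) m, ← Real.rpow_mul ha0.le]
    norm_num
    rw [mul_comm, mul_one_div]
  rw [hexp_eq, hpow_eq] at key
  refine le_trans key (le_of_eq ?_)
  rw [mul_comm, hrdef]
end

section
/- Let t > 2π be real, N = ⌊√(t/2π)⌋, let v₀ ≤ N + 1 be a positive integer, u₀ > 1 real, and define K_r = ⌈v_r/u₀⌉ and v_{r+1} = v_r + K_r for 0 ≤ r < R, where R is the largest integer with v_R < N + 1; set K_R = min{⌈v_R/u₀⌉, N + 1 − v_R}. With s* = 1/2 − it, a_r = t/(2π v_r), b_r = −t/(4π v_r²), c_r(j) = (K_r/v_r)^j · f_{s*}^{(j)}(0)/j!, and any nonnegative integer J, define ε_J(t) := Σ_{r=0}^R (e^{i t·log v_r}/√v_r) · Σ_{j>J} c_r(j)·F(K_r, j; a_r, b_r). Then |ε_J(t)| ≤ c_max(J, t) · M_max(t), where c_max(J, t) := max over 0 ≤ r ≤ R of Σ_{j>J} ((K_r−1)/K_r)^j · |c_r(j)| and M_max(t) := Σ_{r=0}^R F_max(K_r; a_r, b_r)/√v_r. -/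
open Real Complex

/-- The normalized quadratic exponential sum
`F(K, j; a, b) = K^{−j} Σ_{k=0}^{K−1} k^j e^{2πiak + 2πibk²}`
(with `k^j = 1` when `k = j = 0`). -/
noncomputable def quadSum (K : ℕ) (j : ℕ) (a b : ℝ) : ℂ :=
  (1/(K:ℂ)^j) * ∑ k ∈ Finset.range K,
    (k:ℂ)^j * Complex.exp (2*(π:ℂ)*Complex.I*((a*k : ℝ):ℂ) + 2*(π:ℂ)*Complex.I*((b*k^2 : ℝ):ℂ))

/-- `F_max(K; a, b) = max_{0 ≤ Δ < K} |Σ_{k=Δ}^{K−1} e^{2πiak + 2πibk²}|`. -/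
noncomputable def quadSumMax (K : ℕ) (a b : ℝ) : ℝ :=
  ⨆ Δ ∈ Finset.range K, ‖∑ k ∈ Finset.Ico Δ K,
    Complex.exp (2*(π:ℂ)*Complex.I*((a*k : ℝ):ℂ) + 2*(π:ℂ)*Complex.I*((b*k^2 : ℝ):ℂ))‖

/-- The Taylor coefficients `c_r(j) = (K_r/v_r)^j f_{s*}^{(j)}(0)/j!` with `s* = 1/2 − it`. -/
noncomputable def cRS (t : ℝ) (K v : ℕ) (j : ℕ) : ℂ :=
  ((K:ℂ)/(v:ℂ))^j * iteratedDeriv j (fRS (1/2 - t * Complex.I)) 0 / (Nat.factorial j : ℂ)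

-- helper: finset-indexed sup over ℝ
lemma le_biSup_fin {s : Finset ℕ} {g : ℕ → ℝ} (hg : ∀ i ∈ s, 0 ≤ g i) {i : ℕ} (hi : i ∈ s) :
    g i ≤ ⨆ j ∈ s, g j := by
  have hbdd : BddAbove (Set.range fun j => ⨆ _ : j ∈ s, g j) := by
    refine ⟨∑ j ∈ s, g j, ?_⟩
    rintro y ⟨j, rfl⟩
    show (⨆ _ : j ∈ s, g j) ≤ _
    by_cases hj : j ∈ s
    · rw [ciSup_pos hj]; exact Finset.single_le_sum hg hj
    · have : IsEmpty (j ∈ s) := ⟨hj⟩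
      rw [Real.iSup_of_isEmpty]
      exact Finset.sum_nonneg hg
  calc g i = ⨆ _ : i ∈ s, g i := (ciSup_pos (f := fun _ => g i) hi).symm
    _ ≤ ⨆ j ∈ s, g j := le_ciSup hbdd i

-- dstep
def dstep (j : ℕ) : ℕ → ℝ
  | 0 => (0:ℝ)^j
  | (n+1) => ((n+1:ℕ):ℝ)^j - ((n:ℕ):ℝ)^j

lemma dstep_nonneg (j n : ℕ) : 0 ≤ dstep j n := by
  cases n with
  | zero => exact pow_nonneg le_rfl j
  | succ n =>
    simp only [dstep]
    have : ((n:ℕ):ℝ) ≤ ((n+1:ℕ):ℝ) := by exact_mod_cast Nat.le_succ n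
    have := pow_le_pow_left₀ (by positivity) this j
    linarith

lemma dstep_sum (j m : ℕ) : ∑ n ∈ Finset.range (m+1), dstep j n = (m:ℝ)^j := by
  rw [Finset.sum_range_succ']
  have : ∑ i ∈ Finset.range m, dstep j (i+1)
      = ∑ i ∈ Finset.range m, (((i+1:ℕ):ℝ)^j - ((i:ℕ):ℝ)^j) := rfl
  rw [this, Finset.sum_range_sub (fun i => ((i:ℕ):ℝ)^j)]
  simp [dstep]

lemma dstep_sumC (j m : ℕ) : ∑ n ∈ Finset.range (m+1), ((dstep j n : ℝ) : ℂ) = (m:ℂ)^j := by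
  rw [← Complex.ofReal_sum, dstep_sum]
  push_cast
  ring

lemma abel_identity (j : ℕ) (e : ℕ → ℂ) :
    ∀ K : ℕ, ∑ k ∈ Finset.range K, (k:ℂ)^j * e k
      = ∑ Δ ∈ Finset.range K, ((dstep j Δ : ℝ):ℂ) * ∑ k ∈ Finset.Ico Δ K, e k := by
  intro K
  induction K with
  | zero => simp
  | succ K ih =>
    have hsplit : ∀ Δ ∈ Finset.range (K+1),
        ((dstep j Δ : ℝ):ℂ) * ∑ k ∈ Finset.Ico Δ (K+1), e k
        = ((dstep j Δ : ℝ):ℂ) * ∑ k ∈ Finset.Ico Δ K, e k + ((dstep j Δ : ℝ):ℂ) * e K := by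
      intro Δ hΔ
      rw [Finset.sum_Ico_succ_top (Nat.lt_succ_iff.mp (Finset.mem_range.mp hΔ))]
      ring
    rw [Finset.sum_congr rfl hsplit, Finset.sum_add_distrib, ← Finset.sum_mul, dstep_sumC,
      Finset.sum_range_succ ((fun Δ => ((dstep j Δ : ℝ):ℂ) * ∑ k ∈ Finset.Ico Δ K, e k)),
      Finset.sum_range_succ (fun k => (k:ℂ)^j * e k), ih]
    simp

lemma abel_bound (j K : ℕ) (hK : 1 ≤ K) (e : ℕ → ℂ) (M : ℝ)
    (hM : ∀ Δ, Δ < K → ‖∑ k ∈ Finset.Ico Δ K, e k‖ ≤ M) :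
    ‖∑ k ∈ Finset.range K, (k:ℂ)^j * e k‖ ≤ ((K:ℝ)-1)^j * M := by
  obtain ⟨m, rfl⟩ := Nat.exists_eq_add_of_le hK
  rw [abel_identity]
  have h1 : ‖∑ Δ ∈ Finset.range (1+m), ((dstep j Δ : ℝ):ℂ) * ∑ k ∈ Finset.Ico Δ (1+m), e k‖
      ≤ ∑ Δ ∈ Finset.range (1+m), dstep j Δ * M := by
    refine le_trans (norm_sum_le _ _) (Finset.sum_le_sum fun Δ hΔ => ?_)
    rw [norm_mul, Complex.norm_real, Real.norm_of_nonneg (dstep_nonneg j Δ)]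
    exact mul_le_mul_of_nonneg_left (hM Δ (Finset.mem_range.mp hΔ)) (dstep_nonneg j Δ)
  refine h1.trans ?_
  rw [← Finset.sum_mul, add_comm 1 m, dstep_sum]
  have : ((m:ℝ)) = ((m+1:ℕ):ℝ) - 1 := by push_cast; ring
  rw [this]

lemma fRS_diffAt (s : ℂ) {z : ℂ} (hz : ‖z‖ < 1) : DifferentiableAt ℂ (fRS s) z := by
  have h1 : (1 + z) ∈ Complex.slitPlane := by
    refine Complex.mem_slitPlane_iff.mpr (Or.inl ?_)
    have h2 : |z.re| < 1 := (Complex.abs_re_le_norm z).trans_lt hz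
    have : (1 + z).re = 1 + z.re := by simp
    rw [this]
    linarith [(abs_lt.mp h2).1]
  have hne : (1 + z) ≠ 0 := Complex.slitPlane_ne_zero h1
  unfold fRS
  apply DifferentiableAt.div
  · apply Complex.differentiableAt_exp.comp
    fun_prop
  · exact DifferentiableAt.cpow (by fun_prop) (differentiableAt_const s) h1
  · simp only [Ne, Complex.cpow_eq_zero_iff, not_and_or]
    exact Or.inl hne

lemma fRS_summable (s : ℂ) {x : ℝ} (hx0 : 0 ≤ x) (hx1 : x < 1) :
    Summable (fun n => x^n * ‖iteratedDeriv n (fRS s) 0 / (Nat.factorial n : ℂ)‖) := by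
  set ρ : NNReal := ⟨(x+1)/2, by positivity⟩ with hρdef
  have hρ0 : 0 < ρ := by
    rw [← NNReal.coe_lt_coe]
    show (0:ℝ) < (x+1)/2
    positivity
  have hρ1 : (ρ:ℝ) < 1 := by
    show (x+1)/2 < 1
    linarith
  have hxρ : x < (ρ:ℝ) := by
    show x < (x+1)/2
    linarith
  have hd : DifferentiableOn ℂ (fRS s) (Metric.closedBall 0 ρ) := by
    intro z hz
    refine (fRS_diffAt s ?_).differentiableWithinAt
    have : ‖z‖ ≤ ρ := by
      simpa [Complex.dist_eq] using Metric.mem_closedBall.mp hz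
    linarith
  have hps := hd.hasFPowerSeriesOnBall hρ0
  set p := cauchyPowerSeries (fRS s) 0 ρ
  have hrad : ((x.toNNReal : NNReal) : ENNReal) < p.radius := by
    refine lt_of_lt_of_le ?_ hps.r_le
    rw [ENNReal.coe_lt_coe, ← NNReal.coe_lt_coe]
    simpa [Real.coe_toNNReal _ hx0] using hxρ
  have hsum := p.summable_norm_mul_pow hrad
  have hcoeff : ∀ n : ℕ, iteratedDeriv n (fRS s) 0 = (n.factorial : ℂ) * p.coeff n := by
    intro n
    have h := hps.factorial_smul (1:ℂ) n
    rw [iteratedDeriv_eq_iteratedFDeriv]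
    rw [← h]
    rw [nsmul_eq_mul]; rfl
  refine hsum.congr fun n => ?_
  rw [FormalMultilinearSeries.norm_apply_eq_norm_coef, hcoeff n, Real.coe_toNNReal _ hx0,
    mul_div_cancel_left₀ _ (by exact_mod_cast n.factorial_ne_zero : (n.factorial:ℂ) ≠ 0),
    mul_comm]




lemma le_quadSumMax (K : ℕ) (a b : ℝ) {Δ : ℕ} (hΔ : Δ < K) :
    ‖∑ k ∈ Finset.Ico Δ K,
      Complex.exp (2*(π:ℂ)*Complex.I*((a*k : ℝ):ℂ) + 2*(π:ℂ)*Complex.I*((b*k^2 : ℝ):ℂ))‖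
    ≤ quadSumMax K a b := by
  unfold quadSumMax
  exact le_biSup_fin (g := fun Δ => ‖∑ k ∈ Finset.Ico Δ K,
      Complex.exp (2*(π:ℂ)*Complex.I*((a*k : ℝ):ℂ) + 2*(π:ℂ)*Complex.I*((b*k^2 : ℝ):ℂ))‖)
    (fun i _ => norm_nonneg _) (Finset.mem_range.mpr hΔ)

lemma quadSumMax_nonneg {K : ℕ} (hK : 1 ≤ K) (a b : ℝ) : 0 ≤ quadSumMax K a b :=
  le_trans (norm_nonneg _) (le_quadSumMax K a b hK)

lemma quadSum_abs_le (K j : ℕ) (hK : 1 ≤ K) (a b : ℝ) :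
    ‖quadSum K j a b‖ ≤ (((K:ℝ)-1)/K)^j * quadSumMax K a b := by
  unfold quadSum
  rw [norm_mul]
  have h1 : ‖1/(K:ℂ)^j‖ = 1/(K:ℝ)^j := by
    rw [norm_div, norm_one, norm_pow, Complex.norm_natCast]
  rw [h1]
  have h2 := abel_bound j K hK _ (quadSumMax K a b) (fun Δ hΔ => le_quadSumMax K a b hΔ)
  calc 1/(K:ℝ)^j * ‖∑ k ∈ Finset.range K, (k:ℂ)^j *
          Complex.exp (2*(π:ℂ)*Complex.I*((a*k : ℝ):ℂ) + 2*(π:ℂ)*Complex.I*((b*k^2 : ℝ):ℂ))‖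
      ≤ 1/(K:ℝ)^j * (((K:ℝ)-1)^j * quadSumMax K a b) :=
        mul_le_mul_of_nonneg_left h2 (by positivity)
    _ = (((K:ℝ)-1)/K)^j * quadSumMax K a b := by
        rw [div_pow]; ring

lemma inner_bound (t : ℝ) (Kr vr J : ℕ) (hK : 1 ≤ Kr) (hv : 1 ≤ vr) (hKv : Kr ≤ vr) (a b : ℝ) :
    ‖∑' j : ℕ, cRS t Kr vr (J+1+j) * quadSum Kr (J+1+j) a b‖
      ≤ (∑' j : ℕ, (((Kr:ℝ)-1)/Kr)^(J+1+j) * ‖cRS t Kr vr (J+1+j)‖)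
        * quadSumMax Kr a b := by
  set q : ℝ := ((Kr:ℝ)-1)/Kr with hq
  set x : ℝ := ((Kr:ℝ)-1)/vr with hxdef
  set M : ℝ := quadSumMax Kr a b with hM
  have hKpos : (1:ℝ) ≤ Kr := by exact_mod_cast hK
  have hvpos : (1:ℝ) ≤ vr := by exact_mod_cast hv
  have hq0 : 0 ≤ q := div_nonneg (by linarith) (by linarith)
  have hM0 : 0 ≤ M := quadSumMax_nonneg hK a b
  have hx0 : 0 ≤ x := div_nonneg (by linarith) (by linarith)
  have hx1 : x < 1 := by
    rw [hxdef, div_lt_one (by linarith)]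
    have : (Kr:ℝ) ≤ vr := by exact_mod_cast hKv
    linarith
  have hqc : ∀ n : ℕ, q^n * ‖cRS t Kr vr n‖
      = x^n * ‖iteratedDeriv n (fRS (1/2 - t * Complex.I)) 0 / (n.factorial : ℂ)‖ := by
    intro n
    unfold cRS
    rw [mul_div_assoc, norm_mul, norm_pow, norm_div, Complex.norm_natCast, Complex.norm_natCast,
      ← mul_assoc, ← mul_pow]
    have hbase : q * ((Kr:ℝ)/vr) = x := by
      rw [hq, hxdef]; field_simp
    rw [hbase]
  have hsumb : Summable (fun n => q^n * ‖cRS t Kr vr n‖) :=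
    ((fRS_summable (1/2 - t * Complex.I) hx0 hx1).congr fun n => (hqc n).symm)
  have hsumb' : Summable (fun j : ℕ => q^(J+1+j) * ‖cRS t Kr vr (J+1+j)‖) := by
    have := (summable_nat_add_iff (J+1)).mpr hsumb
    exact this.congr fun j => by rw [add_comm j (J+1)]
  have hpt : ∀ j : ℕ, ‖cRS t Kr vr (J+1+j) * quadSum Kr (J+1+j) a b‖
      ≤ (q^(J+1+j) * ‖cRS t Kr vr (J+1+j)‖) * M := by
    intro j
    rw [norm_mul]
    calc ‖cRS t Kr vr (J+1+j)‖ * ‖quadSum Kr (J+1+j) a b‖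
        ≤ ‖cRS t Kr vr (J+1+j)‖ * (q^(J+1+j) * M) :=
          mul_le_mul_of_nonneg_left (quadSum_abs_le Kr (J+1+j) hK a b)
            (norm_nonneg _)
      _ = (q^(J+1+j) * ‖cRS t Kr vr (J+1+j)‖) * M := by ring
  have hsumRHS : Summable (fun j : ℕ =>
      (q^(J+1+j) * ‖cRS t Kr vr (J+1+j)‖) * M) := hsumb'.mul_right M
  have hsum_norm : Summable (fun j : ℕ =>
      ‖cRS t Kr vr (J+1+j) * quadSum Kr (J+1+j) a b‖) :=
    Summable.of_nonneg_of_le (fun j => norm_nonneg _)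
      (fun j => by exact hpt j) hsumRHS
  calc ‖∑' j : ℕ, cRS t Kr vr (J+1+j) * quadSum Kr (J+1+j) a b‖
      = ‖∑' j : ℕ, cRS t Kr vr (J+1+j) * quadSum Kr (J+1+j) a b‖ := rfl
    _ ≤ ∑' j : ℕ, ‖cRS t Kr vr (J+1+j) * quadSum Kr (J+1+j) a b‖ :=
        norm_tsum_le_tsum_norm hsum_norm
    _ ≤ ∑' j : ℕ, (q^(J+1+j) * ‖cRS t Kr vr (J+1+j)‖) * M :=
        Summable.tsum_le_tsum (fun j => by exact hpt j) hsum_norm hsumRHS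
    _ = (∑' j : ℕ, q^(J+1+j) * ‖cRS t Kr vr (J+1+j)‖) * M := tsum_mul_right

/-- Let `t > 2π`, `N = ⌊√(t/2π)⌋`, `v₀ ≤ N+1` a positive integer, `u₀ > 1` real;
`K_r = ⌈v_r/u₀⌉`, `v_{r+1} = v_r + K_r` for `0 ≤ r < R`, where `R` is the largest
integer with `v_R < N+1`, and `K_R = min(⌈v_R/u₀⌉, N+1−v_R)`. With
`a_r = t/(2πv_r)`, `b_r = −t/(4πv_r²)`, `c_r(j) = (K_r/v_r)^j f_{s*}^{(j)}(0)/j!`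
and `ε_J(t) = Σ_{r=0}^R (e^{it log v_r}/√v_r) Σ_{j>J} c_r(j) F(K_r, j; a_r, b_r)`,
one has `|ε_J(t)| ≤ c_max(J,t) · M_max(t)` where
`c_max(J,t) = max_{0≤r≤R} Σ_{j>J} ((K_r−1)/K_r)^j |c_r(j)|` and
`M_max(t) = Σ_{r=0}^R F_max(K_r; a_r, b_r)/√v_r`. -/
theorem stmt_14 (t : ℝ) (ht : 2*π < t)
    (N : ℕ) (hN : N = ⌊Real.sqrt (t/(2*π))⌋₊)
    (v₀ : ℕ) (hv₀pos : 0 < v₀) (hv₀N : v₀ ≤ N + 1)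
    (u₀ : ℝ) (hu₀ : 1 < u₀)
    (v K : ℕ → ℕ) (R : ℕ)
    (hv0 : v 0 = v₀)
    (hKr : ∀ r < R, K r = ⌈(v r : ℝ)/u₀⌉₊)
    (hvr : ∀ r < R, v (r+1) = v r + K r)
    (hvR : v R < N + 1)
    (hRmax : N + 1 ≤ v R + ⌈(v R : ℝ)/u₀⌉₊)
    (hKR : K R = min ⌈(v R : ℝ)/u₀⌉₊ (N + 1 - v R))
    (J : ℕ) :
    ‖∑ r ∈ Finset.range (R+1),
        (Complex.exp (Complex.I * (t:ℂ) * (Real.log (v r : ℝ) : ℂ))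
            / ((Real.sqrt (v r : ℝ) : ℝ) : ℂ))
          * ∑' j : ℕ, cRS t (K r) (v r) (J+1+j)
              * quadSum (K r) (J+1+j) (t/(2*π*(v r : ℝ))) (-t/(4*π*(v r : ℝ)^2))‖
      ≤ (⨆ r ∈ Finset.range (R+1),
            ∑' j : ℕ, (((K r : ℝ) - 1)/(K r : ℝ))^(J+1+j)
              * ‖cRS t (K r) (v r) (J+1+j)‖)
        * ∑ r ∈ Finset.range (R+1),
            quadSumMax (K r) (t/(2*π*(v r : ℝ))) (-t/(4*π*(v r : ℝ)^2))
              / Real.sqrt (v r : ℝ) := by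
  -- basic facts about v and K
  have hvmon : ∀ r, r ≤ R → v₀ ≤ v r := by
    intro r
    induction r with
    | zero => intro _; rw [hv0]
    | succ n ih =>
      intro h
      rw [hvr n (by omega)]
      exact le_trans (ih (by omega)) (Nat.le_add_right _ _)
  have hv1 : ∀ r, r ≤ R → 1 ≤ v r := fun r hr => le_trans hv₀pos (hvmon r hr)
  have hceil_pos : ∀ r, r ≤ R → 1 ≤ ⌈(v r : ℝ)/u₀⌉₊ := by
    intro r hr
    refine Nat.one_le_iff_ne_zero.mpr (Nat.pos_iff_ne_zero.mp (Nat.ceil_pos.mpr ?_))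
    have h1 : (1:ℝ) ≤ (v r : ℝ) := by exact_mod_cast hv1 r hr
    positivity
  have hceil_le : ∀ r, r ≤ R → ⌈(v r : ℝ)/u₀⌉₊ ≤ v r := by
    intro r hr
    refine Nat.ceil_le.mpr ?_
    exact (div_le_self (Nat.cast_nonneg _) hu₀.le)
  have hK1 : ∀ r, r ≤ R → 1 ≤ K r := by
    intro r hr
    rcases lt_or_eq_of_le hr with h | h
    · rw [hKr r h]; exact hceil_pos r hr
    · subst h; rw [hKR]; exact le_min (hceil_pos r le_rfl) (by omega)
  have hKle : ∀ r, r ≤ R → K r ≤ v r := by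
    intro r hr
    rcases lt_or_eq_of_le hr with h | h
    · rw [hKr r h]; exact hceil_le r hr
    · subst h; rw [hKR]; exact le_trans (min_le_left _ _) (hceil_le r le_rfl)
  -- notation
  set C : ℕ → ℝ := fun r => ∑' j : ℕ, (((K r : ℝ) - 1)/(K r : ℝ))^(J+1+j)
      * ‖cRS t (K r) (v r) (J+1+j)‖ with hC
  have hC0 : ∀ r, 0 ≤ C r := by
    intro r
    refine tsum_nonneg fun j => mul_nonneg (pow_nonneg ?_ _) (norm_nonneg _)
    rcases Nat.eq_zero_or_pos (K r) with h | h
    · simp [h]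
    · have : (1:ℝ) ≤ (K r : ℝ) := by exact_mod_cast h
      have hKpos : (0:ℝ) < (K r : ℝ) := by linarith
      exact div_nonneg (by linarith) hKpos.le
  have hCmax : ∀ r ∈ Finset.range (R+1), C r ≤ ⨆ r ∈ Finset.range (R+1), C r :=
    fun r hr => le_biSup_fin (g := C) (fun i _ => hC0 i) hr
  calc ‖∑ r ∈ Finset.range (R+1),
        (Complex.exp (Complex.I * (t:ℂ) * (Real.log (v r : ℝ) : ℂ))
            / ((Real.sqrt (v r : ℝ) : ℝ) : ℂ))
          * ∑' j : ℕ, cRS t (K r) (v r) (J+1+j)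
              * quadSum (K r) (J+1+j) (t/(2*π*(v r : ℝ))) (-t/(4*π*(v r : ℝ)^2))‖
      ≤ ∑ r ∈ Finset.range (R+1), ‖
        (Complex.exp (Complex.I * (t:ℂ) * (Real.log (v r : ℝ) : ℂ))
            / ((Real.sqrt (v r : ℝ) : ℝ) : ℂ))
          * ∑' j : ℕ, cRS t (K r) (v r) (J+1+j)
              * quadSum (K r) (J+1+j) (t/(2*π*(v r : ℝ))) (-t/(4*π*(v r : ℝ)^2))‖ :=
        norm_sum_le _ _
    _ ≤ ∑ r ∈ Finset.range (R+1), (⨆ r ∈ Finset.range (R+1), C r) *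
          (quadSumMax (K r) (t/(2*π*(v r : ℝ))) (-t/(4*π*(v r : ℝ)^2)) / Real.sqrt (v r : ℝ)) := by
        refine Finset.sum_le_sum fun r hr => ?_
        have hrR : r ≤ R := by
          have := Finset.mem_range.mp hr; omega
        have hKr1 := hK1 r hrR
        have hvr1 := hv1 r hrR
        have hM0 : 0 ≤ quadSumMax (K r) (t/(2*π*(v r : ℝ))) (-t/(4*π*(v r : ℝ)^2)) :=
          quadSumMax_nonneg hKr1 _ _
        have hs0 : 0 ≤ Real.sqrt (v r : ℝ) := Real.sqrt_nonneg _
        have habs1 : ‖Complex.exp (Complex.I * (t:ℂ) * (Real.log (v r : ℝ) : ℂ))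
            / ((Real.sqrt (v r : ℝ) : ℝ) : ℂ)‖ = 1 / Real.sqrt (v r : ℝ) := by
          rw [norm_div, Complex.norm_exp, Complex.norm_real, Real.norm_of_nonneg hs0]
          congr 1
          have : (Complex.I * (t:ℂ) * (Real.log (v r : ℝ) : ℂ)).re = 0 := by simp only [Complex.mul_re, Complex.mul_im, Complex.I_re, Complex.I_im, Complex.ofReal_re, Complex.ofReal_im]; ring
          rw [this, Real.exp_zero]
        rw [norm_mul, habs1]
        have hinner := inner_bound t (K r) (v r) J hKr1 hvr1 (hKle r hrR)
          (t/(2*π*(v r : ℝ))) (-t/(4*π*(v r : ℝ)^2))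
        calc (1 / Real.sqrt (v r : ℝ)) * ‖∑' j : ℕ, cRS t (K r) (v r) (J+1+j)
              * quadSum (K r) (J+1+j) (t/(2*π*(v r : ℝ))) (-t/(4*π*(v r : ℝ)^2))‖
            ≤ (1 / Real.sqrt (v r : ℝ)) *
              (C r * quadSumMax (K r) (t/(2*π*(v r : ℝ))) (-t/(4*π*(v r : ℝ)^2))) :=
              mul_le_mul_of_nonneg_left hinner (by positivity)
          _ = C r * (quadSumMax (K r) (t/(2*π*(v r : ℝ))) (-t/(4*π*(v r : ℝ)^2))
                / Real.sqrt (v r : ℝ)) := by ring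
          _ ≤ (⨆ r ∈ Finset.range (R+1), C r) *
              (quadSumMax (K r) (t/(2*π*(v r : ℝ))) (-t/(4*π*(v r : ℝ)^2))
                / Real.sqrt (v r : ℝ)) :=
              mul_le_mul_of_nonneg_right (hCmax r hr) (div_nonneg hM0 hs0)
    _ = (⨆ r ∈ Finset.range (R+1), C r) * ∑ r ∈ Finset.range (R+1),
          quadSumMax (K r) (t/(2*π*(v r : ℝ))) (-t/(4*π*(v r : ℝ)^2)) / Real.sqrt (v r : ℝ) :=
        (Finset.mul_sum _ _ _).symm
end
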